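/- arXiv:2509.16034 — 2 statements merged into one kernel-verified Lean document; each statement's English description precedes it below -/
import Mathlib

section
/- For every integer n ≥ 2, m_{2n} = 2n − 1 − M_{n+1}, where m_k (resp. M_k) is the minimum (resp. maximum) number of alternations among length-k factors of the Thue–Morse sequence. -/
/-- The reduction of a word: replace each maximal run of identical characters
by a single character. -/
def red {α : Type*} [DecidableEq α] (w : List α) : List α :=
  w.destutter (· ≠ ·)

/-- The length-`k` factor of the infinite sequence `x` (1-indexed) starting at
position `i`. -/
def factorAt {α : Type*} (x : ℕ → α) (i k : ℕ) : List α :=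
  (List.range k).map (fun j => x (i + j))

/-- The reduced factor complexity: the number of length-`n` factors of `x`,
counted up to reduced-equivalence (`red v = red w`). -/
noncomputable def redFactorComplexity {α : Type*} [DecidableEq α]
    (x : ℕ → α) (n : ℕ) : ℕ :=
  Set.ncard { u : List α | ∃ i ≥ 1, u = red (factorAt x i n) }

/-- The Thue–Morse sequence (1-indexed): `t n` is the parity of the number of
1's in the binary expansion of `n - 1`. -/
def thueMorse (n : ℕ) : Bool :=
  decide ((Nat.digits 2 (n - 1)).sum % 2 = 1)

/-- The number of alternations (occurrences of 01 or 10) in a binary word. -/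
def alt (w : List Bool) : ℕ :=
  (List.zipWith (fun a b => a != b) w w.tail).count true

/-- The minimum number of alternations among length-`k` factors of Thue–Morse. -/
noncomputable def tmAltMin (k : ℕ) : ℕ :=
  sInf { a : ℕ | ∃ i ≥ 1, a = alt (factorAt thueMorse i k) }

/-- The maximum number of alternations among length-`k` factors of Thue–Morse. -/
noncomputable def tmAltMax (k : ℕ) : ℕ :=
  sSup { a : ℕ | ∃ i ≥ 1, a = alt (factorAt thueMorse i k) }

/-- The Thue–Morse morphism `0 → 01`, `1 → 10`. -/
def mu (w : List Bool) : List Bool :=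
  w.flatMap (fun b => if b then [true, false] else [false, true])

/-- The regular paperfolding sequence (1-indexed): writing `n = n' * 2^k` with
`n'` odd, `f n = 1` iff `n' ≡ 3 (mod 4)`. -/
def paperfold (n : ℕ) : Bool :=
  decide ((n / 2 ^ (n.factorization 2)) % 4 = 3)

/-- The reduced abelian complexity: the number of length-`n` factors of `x`,
counted up to the equivalence identifying `v` and `w` whenever `red v` is a
rearrangement of the characters of `red w`. -/
noncomputable def redAbelianComplexity {α : Type*} [DecidableEq α]
    (x : ℕ → α) (n : ℕ) : ℕ :=
  Set.ncard { m : Multiset α | ∃ i ≥ 1, m = ↑(red (factorAt x i n)) }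

/- ### Auxiliary machinery -/

section Aux

lemma S_odd (m : ℕ) : (Nat.digits 2 (2*m+1)).sum = 1 + (Nat.digits 2 m).sum := by
  rw [Nat.digits_def' (by norm_num : (1:ℕ) < 2) (by omega)]
  simp [Nat.mul_add_div, Nat.mul_add_mod]

lemma S_even (m : ℕ) (h : 0 < m) : (Nat.digits 2 (2*m)).sum = (Nat.digits 2 m).sum := by
  rw [Nat.digits_def' (by norm_num : (1:ℕ) < 2) (by omega)]
  simp [Nat.mul_div_cancel_left, Nat.mul_mod_right]

lemma v2_even' (m : ℕ) (h : 0 < m) : (2*m).factorization 2 = m.factorization 2 + 1 := by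
  rw [Nat.factorization_mul (by norm_num) (by omega)]
  simp [Nat.Prime.factorization_self Nat.prime_two]
  ring

lemma parity_claim : ∀ n, 1 ≤ n →
    ((Nat.digits 2 n).sum + (Nat.digits 2 (n-1)).sum + n.factorization 2) % 2 = 1 := by
  intro n
  induction n using Nat.strong_induction_on with
  | _ n ih =>
    intro hn
    rcases Nat.even_or_odd n with ⟨m, hm⟩ | ⟨m, hm⟩
    · subst hm
      have hm1 : 1 ≤ m := by omega
      have h1 : m + m = 2 * m := by ring
      rw [h1, S_even m (by omega), v2_even' m (by omega)]
      have h2 : 2*m - 1 = 2*(m-1)+1 := by omega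
      rw [h2, S_odd]
      have := ih m (by omega) hm1
      omega
    · subst hm
      rw [S_odd]
      have hv : (2*m+1).factorization 2 = 0 := by
        simp [Nat.factorization_eq_zero_iff]
      rw [hv]
      rcases Nat.eq_zero_or_pos m with h0 | h0
      · subst h0; simp
      · have h2 : 2*m+1-1 = 2*m := by omega
        rw [h2, S_even m h0]
        omega

def E (m : ℕ) : Bool := decide (m.factorization 2 % 2 = 0)

lemma d_char (n : ℕ) (hn : 1 ≤ n) :
    (thueMorse (n+1) != thueMorse n) = E n := by
  have := parity_claim n hn
  simp only [thueMorse, E, Nat.add_sub_cancel]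
  have h1 : (Nat.digits 2 (n-1)).sum % 2 = 0 ∨ (Nat.digits 2 (n-1)).sum % 2 = 1 := by omega
  have h2 : (Nat.digits 2 n).sum % 2 = 0 ∨ (Nat.digits 2 n).sum % 2 = 1 := by omega
  rcases h1 with h1 | h1 <;> rcases h2 with h2 | h2 <;> simp [h1, h2] <;> omega

lemma notE_iff (m : ℕ) (hm : 1 ≤ m) : (E m = false) ↔ ∃ r, 1 ≤ r ∧ m = 2*r ∧ E r = true := by
  rcases Nat.even_or_odd m with ⟨r, hr⟩ | ⟨r, hr⟩
  · have hr' : m = 2*r := by omega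
    have hr1 : 1 ≤ r := by omega
    have := v2_even' r (by omega)
    rw [← hr'] at this
    constructor
    · intro h
      refine ⟨r, hr1, hr', ?_⟩
      simp [E] at h ⊢
      omega
    · rintro ⟨r', hr1', hr2', h3⟩
      have : r' = r := by omega
      subst this
      simp [E] at h3 ⊢
      omega
  · have hv : m.factorization 2 = 0 := by
      have : ¬ 2 ∣ m := by omega
      simp [Nat.factorization_eq_zero_iff, this]
    constructor
    · intro h; simp [E, hv] at h
    · rintro ⟨r', _, hr2', _⟩; omega

lemma alt_cons_cons (a b : Bool) (t : List Bool) :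
    alt (a :: b :: t) = (if a != b then 1 else 0) + alt (b :: t) := by
  simp only [alt, List.tail_cons, List.zipWith_cons_cons, List.count_cons]
  split <;> simp_all <;> omega

lemma alt_map_range : ∀ (k : ℕ) (f : ℕ → Bool),
    alt ((List.range (k+1)).map f) = ((List.range k).countP (fun j => f j != f (j+1))) := by
  intro k
  induction k with
  | zero =>
    intro f
    simp [alt, List.range_succ]
  | succ k ih =>
    intro f
    have h1 : (List.range (k+2)).map f = f 0 :: (List.range (k+1)).map (fun j => f (j+1)) := by
      rw [List.range_succ_eq_map]; simp
    have h2 : (List.range (k+1)).map (fun j => f (j+1))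
        = f 1 :: (List.range k).map (fun j => f (j+2)) := by
      rw [List.range_succ_eq_map]; simp
    rw [h1, h2, alt_cons_cons, ← h2, ih (fun j => f (j+1))]
    rw [show List.range (k+1) = 0 :: (List.range k).map (·+1) from List.range_succ_eq_map (n := k)]
    rw [List.countP_cons, List.countP_map]
    simp only [Function.comp_def, Nat.zero_add, show ∀ x:ℕ, x+1+1 = x+2 from fun _ => rfl]
    omega

lemma countP_eq_card (p : ℕ → Bool) (L : ℕ) :
    (List.range L).countP p = ((Finset.range L).filter (fun j => p j)).card := by
  induction L with
  | zero => simp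
  | succ L ih =>
    rw [List.range_succ, Finset.range_add_one, List.countP_append, Finset.filter_insert]
    by_cases h : p L <;> simp [h, ih, Finset.card_insert_of_notMem]

lemma card_Ico_shift (p : ℕ → Bool) (a L : ℕ) :
    ((Finset.Ico a (a+L)).filter (fun m => p m)).card
      = ((Finset.range L).filter (fun j => p (a+j))).card := by
  apply Finset.card_bij (fun m _ => m - a)
  · intro m hm
    simp only [Finset.mem_filter, Finset.mem_Ico] at hm
    simp only [Finset.mem_filter, Finset.mem_range]
    constructor
    · omega
    · have : a + (m - a) = m := by omega
      rw [this]; exact hm.2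
  · intro m hm m' hm' h
    simp only [Finset.mem_filter, Finset.mem_Ico] at hm hm'
    omega
  · intro j hj
    simp only [Finset.mem_filter, Finset.mem_range] at hj
    exact ⟨a + j, by simp [Finset.mem_filter, Finset.mem_Ico, hj.1, hj.2], by omega⟩

/-- Count of `E` in the window `[a, a+L)`. -/
def cnt (a L : ℕ) : ℕ := ((Finset.Ico a (a+L)).filter (fun m => E m = true)).card

/-- Count of `¬E` in the window `[a, a+L)`. -/
def cntZ (a L : ℕ) : ℕ := ((Finset.Ico a (a+L)).filter (fun m => E m = false)).card

lemma cnt_add_cntZ (a L : ℕ) : cnt a L + cntZ a L = L := by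
  have h := Finset.card_filter_add_card_filter_not
    (s := Finset.Ico a (a+L)) (p := fun m => E m = true)
  rw [Nat.card_Ico] at h
  have h2 : (Finset.Ico a (a+L)).filter (fun m => ¬ (E m = true))
      = (Finset.Ico a (a+L)).filter (fun m => E m = false) := by
    apply Finset.filter_congr
    intro m _
    simp
  rw [h2] at h
  simp only [cnt, cntZ]
  omega

lemma cnt_le (a L : ℕ) : cnt a L ≤ L := by
  have := cnt_add_cntZ a L; omega

lemma cntZ_le (a L : ℕ) : cntZ a L ≤ L := by
  have := cnt_add_cntZ a L; omega

lemma cnt_mono (a : ℕ) {L L' : ℕ} (h : L ≤ L') : cnt a L ≤ cnt a L' := by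
  apply Finset.card_le_card
  apply Finset.filter_subset_filter
  apply Finset.Ico_subset_Ico le_rfl
  omega

lemma zeros_count (a b c d : ℕ) (ha : 1 ≤ a)
    (h : ∀ r : ℕ, 1 ≤ r → ((a ≤ 2*r ∧ 2*r < b) ↔ (c ≤ r ∧ r < d)))
    (hc : 1 ≤ c) :
    ((Finset.Ico a b).filter (fun m => E m = false)).card
      = ((Finset.Ico c d).filter (fun m => E m = true)).card := by
  rw [show (Finset.Ico a b).filter (fun m => E m = false)
      = ((Finset.Ico c d).filter (fun m => E m = true)).image (fun r => 2*r) by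
    ext m
    simp only [Finset.mem_filter, Finset.mem_Ico, Finset.mem_image]
    constructor
    · rintro ⟨⟨h1, h2⟩, h3⟩
      obtain ⟨r, hr1, hr2, hr3⟩ := (notE_iff m (by omega)).1 h3
      exact ⟨r, ⟨(h r hr1).1 ⟨by omega, by omega⟩, hr3⟩, by omega⟩
    · rintro ⟨r, ⟨⟨h1, h2⟩, h3⟩, h4⟩
      have hr1 : 1 ≤ r := by omega
      have := (h r hr1).2 ⟨h1, h2⟩
      refine ⟨⟨by omega, by omega⟩, ?_⟩
      exact (notE_iff m (by omega)).2 ⟨r, hr1, by omega, h3⟩]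
  exact Finset.card_image_of_injective _ (fun x y hxy => by omega)

/-- Main link: the alternation count of a factor is the count of `E` in a window. -/
lemma alt_factor (i k : ℕ) (hi : 1 ≤ i) (hk : 1 ≤ k) :
    alt (factorAt thueMorse i k) = cnt i (k-1) := by
  obtain ⟨k', rfl⟩ : ∃ k', k = k' + 1 := ⟨k - 1, by omega⟩
  rw [factorAt, alt_map_range]
  have hcong : (List.range k').countP (fun j => thueMorse (i+j) != thueMorse (i+(j+1)))
      = (List.range k').countP (fun j => E (i+j)) := by
    apply List.countP_congr
    intro j _
    have h1 : i + (j + 1) = (i+j) + 1 := by ring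
    rw [h1, ← d_char (i+j) (by omega)]
    cases thueMorse (i+j) <;> cases thueMorse ((i+j)+1) <;> simp
  rw [hcong, countP_eq_card, Nat.add_sub_cancel]
  unfold cnt
  rw [card_Ico_shift]

lemma set_rewrite (k : ℕ) (hk : 1 ≤ k) :
    { a : ℕ | ∃ i ≥ 1, a = alt (factorAt thueMorse i k) }
      = { a : ℕ | ∃ i ≥ 1, a = cnt i (k-1) } := by
  ext a
  simp only [Set.mem_setOf_eq]
  constructor
  · rintro ⟨i, hi, rfl⟩; exact ⟨i, hi, (alt_factor i k hi hk).symm ▸ rfl⟩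
  · rintro ⟨i, hi, rfl⟩; exact ⟨i, hi, (alt_factor i k hi hk).symm⟩

end Aux

theorem stmt2 (n : ℕ) (hn : 2 ≤ n) :
    tmAltMin (2 * n) = 2 * n - 1 - tmAltMax (n + 1) := by
  set L : ℕ := 2 * n - 1 with hL
  have hL1 : (2*n) - 1 = L := rfl
  have hLn : (n+1) - 1 = n := by omega
  rw [tmAltMin, tmAltMax, set_rewrite (2*n) (by omega), set_rewrite (n+1) (by omega), hL1, hLn]
  set A : Set ℕ := { a : ℕ | ∃ i ≥ 1, a = cnt i L } with hA
  set T : Set ℕ := { a : ℕ | ∃ i ≥ 1, a = cnt i n } with hT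
  set Z : Set ℕ := { a : ℕ | ∃ i ≥ 1, a = cntZ i L } with hZ
  have hAne : A.Nonempty := ⟨cnt 1 L, 1, le_refl 1, rfl⟩
  have hTne : T.Nonempty := ⟨cnt 1 n, 1, le_refl 1, rfl⟩
  have hZne : Z.Nonempty := ⟨cntZ 1 L, 1, le_refl 1, rfl⟩
  have hTbdd : BddAbove T := by
    refine ⟨n, ?_⟩
    rintro a ⟨i, hi, rfl⟩
    exact cnt_le i n
  have hZbdd : BddAbove Z := by
    refine ⟨L, ?_⟩
    rintro a ⟨i, hi, rfl⟩
    exact cntZ_le i L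
  -- step 1 : every element of Z is an element of T or bounded by one
  have hZeven : ∀ m : ℕ, 1 ≤ m → cntZ (2*m) L = cnt m n := by
    intro m hm
    have hLval : 2*m + L = 2*m + 2*n - 1 := by omega
    rw [cntZ, cnt]
    rw [zeros_count (2*m) (2*m+L) m (m+n) (by omega) (fun r hr => by omega) (by omega)]
  have hZodd : ∀ m : ℕ, 1 ≤ m → Odd m → cntZ m L = cnt ((m+1)/2) (n-1) := by
    intro m hm ⟨c, hc⟩
    rw [cntZ, cnt]
    have h2 : (m+1)/2 = c + 1 := by omega
    rw [h2]
    apply zeros_count m (m+L) (c+1) (c+1+(n-1)) (by omega) ?_ (by omega)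
    intro r hr
    omega
  -- sSup Z = sSup T
  have hsup : sSup Z = sSup T := by
    apply le_antisymm
    · apply csSup_le hZne
      rintro z ⟨i, hi, rfl⟩
      rcases Nat.even_or_odd i with ⟨m, hm⟩ | hodd
      · have hm1 : 1 ≤ m := by omega
        have : i = 2*m := by omega
        rw [this, hZeven m hm1]
        exact le_csSup hTbdd ⟨m, hm1, rfl⟩
      · rw [hZodd i hi hodd]
        calc cnt ((i+1)/2) (n-1) ≤ cnt ((i+1)/2) n := cnt_mono _ (by omega)
          _ ≤ sSup T := le_csSup hTbdd ⟨(i+1)/2, by omega, rfl⟩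
    · apply csSup_le hTne
      rintro t ⟨m, hm, rfl⟩
      rw [← hZeven m hm]
      exact le_csSup hZbdd ⟨2*m, by omega, rfl⟩
  -- sInf A = L - sSup Z
  have hinf : sInf A = L - sSup Z := by
    obtain ⟨i0, hi0, hMeq⟩ := Nat.sSup_mem hZne hZbdd
    apply le_antisymm
    · have : L - sSup Z = cnt i0 L := by
        have := cnt_add_cntZ i0 L
        omega
      rw [this]
      exact Nat.sInf_le ⟨i0, hi0, rfl⟩
    · apply le_csInf hAne
      rintro a ⟨i, hi, rfl⟩
      have h1 : cntZ i L ≤ sSup Z := le_csSup hZbdd ⟨i, hi, rfl⟩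
      have h2 := cnt_add_cntZ i L
      omega
  rw [hinf, hsup]
end

section
/- For every integer n ≥ 2, M_{2n} = 2n − 1 − m_n, where m_k (resp. M_k) is the minimum (resp. maximum) number of alternations among length-k factors of the Thue–Morse sequence. -/
lemma alt_cons (a b : Bool) (l : List Bool) :
    alt (a :: b :: l) = (a != b).toNat + alt (b :: l) := by
  simp [alt, List.count_cons]
  cases a <;> cases b <;> simp [Nat.add_comm]

lemma alt_le_concat : ∀ (l : List Bool) (a : Bool), alt l ≤ alt (l ++ [a])
  | [], a => by simp [alt]
  | [b], a => by simp [alt]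
  | b :: c :: l, a => by
    have h := alt_le_concat (c :: l) a
    simp only [List.cons_append, alt_cons] at *
    omega

lemma alt_append_two : ∀ (l : List Bool) (a b : Bool),
    alt (l ++ [a, b]) = alt (l ++ [a]) + (a != b).toNat
  | [], a, b => by
    show alt [a, b] = alt [a] + (a != b).toNat
    rw [alt_cons]
    simp [alt]
  | [x], a, b => by
    show alt [x, a, b] = alt [x, a] + (a != b).toNat
    rw [alt_cons, alt_cons, alt_cons]
    simp [alt]
  | x :: y :: l, a, b => by
    have h := alt_append_two (y :: l) a b
    simp only [List.cons_append, alt_cons] at *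
    omega

lemma mu_cons (a : Bool) (l : List Bool) : mu (a :: l) = a :: (!a) :: mu l := by
  cases a <;> simp [mu]

lemma mu_append_single (l : List Bool) (a : Bool) :
    mu (l ++ [a]) = mu l ++ [a, !a] := by
  cases a <;> simp [mu]

lemma alt_mu : ∀ (a : Bool) (l : List Bool),
    alt (mu (a :: l)) + alt (a :: l) + 1 = 2 * (l.length + 1)
  | a, [] => by cases a <;> simp [mu, alt]
  | a, b :: l => by
    have ih := alt_mu b l
    rw [mu_cons a, mu_cons b l, alt_cons, alt_cons, ← mu_cons b l, alt_cons]
    have h1 : (a != !a).toNat = 1 := by cases a <;> simp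
    have h2 : ((!a) != b).toNat + (a != b).toNat = 1 := by cases a <;> cases b <;> simp
    simp only [h1, List.length_cons]
    omega

lemma factorAt_succ_left {α : Type*} (x : ℕ → α) (i k : ℕ) :
    factorAt x i (k + 1) = x i :: factorAt x (i + 1) k := by
  simp only [factorAt, List.range_succ_eq_map, List.map_cons, List.map_map]
  congr 1
  apply List.map_congr_left
  intro a _
  exact congrArg x (by omega)

lemma factorAt_succ_right {α : Type*} (x : ℕ → α) (i k : ℕ) :
    factorAt x i (k + 1) = factorAt x i k ++ [x (i + k)] := by
  simp [factorAt, List.range_succ]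

lemma dsum_even (m : ℕ) : (Nat.digits 2 (2 * m)).sum % 2 = (Nat.digits 2 m).sum % 2 := by
  rcases Nat.eq_zero_or_pos m with h | h
  · simp [h]
  · rw [Nat.digits_def' (by norm_num : 1 < 2) (by omega)]
    simp [Nat.mul_div_cancel_left m (by norm_num : 0 < 2), Nat.mul_mod_right]

lemma dsum_odd (m : ℕ) : (Nat.digits 2 (2 * m + 1)).sum % 2 = ((Nat.digits 2 m).sum + 1) % 2 := by
  rw [Nat.digits_def' (by norm_num : 1 < 2) (by omega)]
  have h1 : (2 * m + 1) % 2 = 1 := by omega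
  have h2 : (2 * m + 1) / 2 = m := by omega
  rw [h1, h2]
  simp [Nat.add_comm]

lemma tm_odd (m : ℕ) : thueMorse (2 * m + 1) = thueMorse (m + 1) := by
  simp only [thueMorse, Nat.add_sub_cancel]
  rw [dsum_even]

lemma tm_even (m : ℕ) : thueMorse (2 * m + 2) = !thueMorse (m + 1) := by
  simp only [thueMorse, Nat.add_sub_cancel]
  have h3 : 2 * m + 2 - 1 = 2 * m + 1 := by omega
  rw [h3, dsum_odd]
  rcases Nat.mod_two_eq_zero_or_one (Nat.digits 2 m).sum with h | h <;>
    simp [Nat.add_mod, h]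

lemma length_factorAt {α : Type*} (x : ℕ → α) (i k : ℕ) :
    (factorAt x i k).length = k := by simp [factorAt]

lemma alt_le_len (l : List Bool) : alt l ≤ l.length := by
  refine le_trans List.count_le_length ?_
  simp [List.length_zipWith]

lemma mu_factorAt : ∀ (n j : ℕ),
    mu (factorAt thueMorse (j + 1) n) = factorAt thueMorse (2 * j + 1) (2 * n)
  | 0, j => by simp [factorAt, mu]
  | n + 1, j => by
    rw [factorAt_succ_right, mu_append_single, mu_factorAt n j]
    rw [show 2 * (n + 1) = (2 * n + 1) + 1 by ring, factorAt_succ_right,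
      factorAt_succ_right]
    have e1 : thueMorse (2 * j + 1 + 2 * n) = thueMorse (j + 1 + n) := by
      rw [show 2 * j + 1 + 2 * n = 2 * (j + n) + 1 by ring, tm_odd,
        show j + n + 1 = j + 1 + n by ring]
    have e2 : thueMorse (2 * j + 1 + (2 * n + 1)) = !thueMorse (j + 1 + n) := by
      rw [show 2 * j + 1 + (2 * n + 1) = 2 * (j + n) + 2 by ring, tm_even,
        show j + n + 1 = j + 1 + n by ring]
    rw [e1, e2]
    simp

lemma alt_factor_head (x : ℕ → Bool) (i k : ℕ) :
    alt (factorAt x i (k + 2)) =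
      (x i != x (i + 1)).toNat + alt (factorAt x (i + 1) (k + 1)) := by
  rw [show k + 2 = (k + 1) + 1 from rfl, factorAt_succ_left x i (k + 1),
    factorAt_succ_left x (i + 1) k, alt_cons, ← factorAt_succ_left x (i + 1) k]

lemma alt_factor_last (x : ℕ → Bool) (i k : ℕ) :
    alt (factorAt x i (k + 2)) =
      alt (factorAt x i (k + 1)) + (x (i + k) != x (i + k + 1)).toNat := by
  rw [show k + 2 = (k + 1) + 1 from rfl, factorAt_succ_right x i (k + 1),
    factorAt_succ_right x i k, List.append_assoc]
  rw [show [x (i + k)] ++ [x (i + (k + 1))] = [x (i + k), x (i + k + 1)] from rfl]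
  rw [alt_append_two, ← factorAt_succ_right]

lemma bne_not_self' (b : Bool) : (b != !b).toNat = 1 := by cases b <;> rfl

lemma alt_factor_mono (x : ℕ → Bool) (i k : ℕ) :
    alt (factorAt x i k) ≤ alt (factorAt x i (k + 1)) := by
  rw [factorAt_succ_right]
  exact alt_le_concat _ _

lemma hsum_mu (m j : ℕ) :
    alt (mu (factorAt thueMorse (j + 1) (m + 1))) +
      alt (factorAt thueMorse (j + 1) (m + 1)) + 1 = 2 * (m + 1) := by
  rw [factorAt_succ_left]
  have h := alt_mu (thueMorse (j + 1)) (factorAt thueMorse (j + 1 + 1) m)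
  rw [length_factorAt] at h
  exact h

theorem stmt3 (n : ℕ) (hn : 2 ≤ n) :
    tmAltMax (2 * n) = 2 * n - 1 - tmAltMin n := by
  obtain ⟨N, rfl⟩ : ∃ N, n = N + 2 := ⟨n - 2, by omega⟩
  set m := tmAltMin (N + 2) with hm
  -- facts about the min
  have hmin_le : ∀ i, 1 ≤ i → m ≤ alt (factorAt thueMorse i (N + 2)) := fun i hi =>
    Nat.sInf_le ⟨i, hi, rfl⟩
  have hmin_mem : m ∈ { a : ℕ | ∃ i ≥ 1, a = alt (factorAt thueMorse i (N + 2)) } :=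
    Nat.sInf_mem ⟨_, 1, le_refl 1, rfl⟩
  obtain ⟨i0, hi0, hmeq⟩ := hmin_mem
  -- the set for the max
  have hne : { a : ℕ | ∃ i ≥ 1, a = alt (factorAt thueMorse i (2 * (N + 2))) }.Nonempty :=
    ⟨_, 1, le_refl 1, rfl⟩
  have hbdd : BddAbove { a : ℕ | ∃ i ≥ 1, a = alt (factorAt thueMorse i (2 * (N + 2))) } := by
    refine ⟨2 * (N + 2), ?_⟩
    rintro a ⟨i, -, rfl⟩
    calc alt (factorAt thueMorse i (2 * (N + 2)))
        ≤ (factorAt thueMorse i (2 * (N + 2))).length := alt_le_len _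
      _ = 2 * (N + 2) := length_factorAt _ _ _
  -- upper bound for every element
  have upper : ∀ a ∈ { a : ℕ | ∃ i ≥ 1, a = alt (factorAt thueMorse i (2 * (N + 2))) },
      a ≤ 2 * (N + 2) - 1 - m := by
    rintro a ⟨i, hi, rfl⟩
    rcases Nat.even_or_odd i with he | ho
    · -- i even : i = 2 j + 2
      obtain ⟨j, rfl⟩ : ∃ j, i = 2 * j + 2 := by
        obtain ⟨c, hc⟩ := he; exact ⟨c - 1, by omega⟩
      have hfac : mu (factorAt thueMorse (j + 1) (N + 3)) =
          factorAt thueMorse (2 * j + 1) (2 * N + 4 + 2) := by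
        rw [mu_factorAt (N + 3) j, show 2 * (N + 3) = 2 * N + 4 + 2 by ring]
      have hhead := alt_factor_head thueMorse (2 * j + 1) (2 * N + 4)
      have hlast := alt_factor_last thueMorse (2 * j + 1 + 1) (2 * N + 3)
      have e1 : (thueMorse (2 * j + 1) != thueMorse (2 * j + 1 + 1)).toNat = 1 := by
        rw [show 2 * j + 1 + 1 = 2 * j + 2 from rfl, tm_odd, tm_even]
        exact bne_not_self' _
      have e2 : (thueMorse (2 * j + 1 + 1 + (2 * N + 3)) !=
          thueMorse (2 * j + 1 + 1 + (2 * N + 3) + 1)).toNat = 1 := by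
        rw [show 2 * j + 1 + 1 + (2 * N + 3) = 2 * (j + N + 2) + 1 by ring,
          show 2 * (j + N + 2) + 1 + 1 = 2 * (j + N + 2) + 2 from rfl, tm_odd, tm_even]
        exact bne_not_self' _
      rw [e1] at hhead
      rw [e2] at hlast
      rw [show (2 * N + 3) + 2 = 2 * N + 4 + 1 by ring,
        show (2 * N + 3) + 1 = 2 * N + 4 by ring] at hlast
      have hsum := hsum_mu (N + 2) j
      rw [show (N : ℕ) + 2 + 1 = N + 3 from rfl] at hsum
      rw [hfac] at hsum
      have hmono : alt (factorAt thueMorse (j + 1) (N + 2)) ≤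
          alt (factorAt thueMorse (j + 1) (N + 3)) := alt_factor_mono thueMorse (j + 1) (N + 2)
      have hml := hmin_le (j + 1) (by omega)
      have hgoal : alt (factorAt thueMorse (2 * j + 2) (2 * (N + 2))) =
          alt (factorAt thueMorse (2 * j + 1 + 1) (2 * N + 4)) := by
        rw [show 2 * j + 1 + 1 = 2 * j + 2 from rfl, show 2 * (N + 2) = 2 * N + 4 by ring]
      rw [hgoal]
      omega
    · -- i odd : i = 2 j + 1
      obtain ⟨j, rfl⟩ := ho
      have hfac : mu (factorAt thueMorse (j + 1) (N + 2)) =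
          factorAt thueMorse (2 * j + 1) (2 * (N + 2)) := mu_factorAt (N + 2) j
      have hsum := hsum_mu (N + 1) j
      rw [show (N : ℕ) + 1 + 1 = N + 2 from rfl] at hsum
      rw [hfac] at hsum
      have hml := hmin_le (j + 1) (by omega)
      omega
  -- the value 2n-1-m is attained
  obtain ⟨j0, rfl⟩ : ∃ j0, i0 = j0 + 1 := ⟨i0 - 1, by omega⟩
  have hfac0 : mu (factorAt thueMorse (j0 + 1) (N + 2)) =
      factorAt thueMorse (2 * j0 + 1) (2 * (N + 2)) := mu_factorAt (N + 2) j0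
  have hsum0 := hsum_mu (N + 1) j0
  rw [show (N : ℕ) + 1 + 1 = N + 2 from rfl] at hsum0
  rw [hfac0] at hsum0
  have hmem : alt (factorAt thueMorse (2 * j0 + 1) (2 * (N + 2))) ∈
      { a : ℕ | ∃ i ≥ 1, a = alt (factorAt thueMorse i (2 * (N + 2))) } :=
    ⟨2 * j0 + 1, by omega, rfl⟩
  have heq : 2 * (N + 2) - 1 - m = alt (factorAt thueMorse (2 * j0 + 1) (2 * (N + 2))) := by
    omega
  apply le_antisymm
  · exact csSup_le hne upper
  · rw [heq]
    exact le_csSup hbdd hmem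
end
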